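/- For every graph G, γ_g'(G) ≤ γ_g(G) + 1. -/

import Mathlib

open Finset

namespace DomGame

variable {V : Type*} [Fintype V] [DecidableEq V]

/-- Closed neighborhood of `v` in `G`, as a `Finset`. -/
noncomputable def cn (G : SimpleGraph V) (v : V) : Finset V :=
  haveI : DecidablePred (fun u : V => u = v ∨ G.Adj v u) := fun _ => Classical.propDecidable _
  Finset.univ.filter (fun u : V => u = v ∨ G.Adj v u)

/-- Value (number of remaining moves, optimal play) of the domination game on `G`,
with fuel, where `D` is the set of already dominated vertices and `who = true`
means Dominator is to move (minimizing); `who = false` means Staller (maximizing). -/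
noncomputable def auxVal (G : SimpleGraph V) : ℕ → Bool → Finset V → ℕ
  | 0, _, _ => 0
  | n + 1, who, D =>
    if D = Finset.univ then 0
    else
      haveI : DecidablePred (fun v : V => ¬ cn G v ⊆ D) := fun _ => Classical.propDecidable _
      let moves : Finset V := Finset.univ.filter (fun v : V => ¬ cn G v ⊆ D)
      if who then
        WithTop.untopD 0 ((moves.image (fun v => 1 + auxVal G n false (D ∪ cn G v))).min)
      else
        moves.sup (fun v => 1 + auxVal G n true (D ∪ cn G v))

/-- Remaining moves of the domination game on the partially dominated graph `(G, D)`,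
Dominator to move, both players optimal. -/
noncomputable def gVal (G : SimpleGraph V) (D : Finset V) : ℕ :=
  auxVal G (Fintype.card V) true D

/-- Remaining moves, Staller to move. -/
noncomputable def gVal' (G : SimpleGraph V) (D : Finset V) : ℕ :=
  auxVal G (Fintype.card V) false D

/-- The game domination number (Dominator starts). -/
noncomputable def gammaG (G : SimpleGraph V) : ℕ := gVal G ∅

/-- The Staller-start game domination number. -/
noncomputable def gammaG' (G : SimpleGraph V) : ℕ := gVal' G ∅

/-- `S` is a dominating set of `G`. -/
def IsDomSet (G : SimpleGraph V) (S : Finset V) : Prop :=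
  ∀ v : V, ∃ u ∈ S, u = v ∨ G.Adj u v

/-- The domination number of `G`. -/
noncomputable def gamma (G : SimpleGraph V) : ℕ :=
  sInf {n | ∃ S : Finset V, IsDomSet G S ∧ S.card = n}

noncomputable def movesOf (G : SimpleGraph V) (D : Finset V) : Finset V :=
  haveI : DecidablePred (fun v : V => ¬ cn G v ⊆ D) := fun _ => Classical.propDecidable _
  Finset.univ.filter (fun v : V => ¬ cn G v ⊆ D)

lemma mem_movesOf {G : SimpleGraph V} {D : Finset V} {v : V} :
    v ∈ movesOf G D ↔ ¬ cn G v ⊆ D := by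
  classical
  simp [movesOf]

lemma auxVal_succ (G : SimpleGraph V) (n : ℕ) (who : Bool) (D : Finset V) (h : D ≠ Finset.univ) :
    auxVal G (n+1) who D =
      if who then
        WithTop.untopD 0 (((movesOf G D).image (fun v => 1 + auxVal G n false (D ∪ cn G v))).min)
      else
        (movesOf G D).sup (fun v => 1 + auxVal G n true (D ∪ cn G v)) := by
  rw [auxVal]
  simp only [h, if_false]
  rfl

lemma mem_cn_self (G : SimpleGraph V) (v : V) : v ∈ cn G v := by
  classical
  simp [cn]

lemma movesOf_nonempty {G : SimpleGraph V} {D : Finset V} (h : D ≠ Finset.univ) :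
    (movesOf G D).Nonempty := by
  obtain ⟨v, hv⟩ : ∃ v, v ∉ D := by
    by_contra h'; push_neg at h'
    exact h (Finset.eq_univ_iff_forall.2 h')
  exact ⟨v, mem_movesOf.2 fun hs => hv (hs (mem_cn_self G v))⟩

lemma untop'_min_image_le {s : Finset V} (hs : s.Nonempty) (f : V → ℕ) {v : V} (hv : v ∈ s) :
    WithTop.untopD 0 ((s.image f).min) ≤ f v := by
  have h1 : (s.image f).min ≤ (f v : WithTop ℕ) := Finset.min_le (Finset.mem_image_of_mem f hv)
  obtain ⟨m, hm⟩ := Finset.min_of_nonempty (hs.image f)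
  rw [hm] at h1 ⊢; simp only [WithTop.untopD_coe]
  exact Nat.cast_le.mp h1

lemma le_untop'_min_image {s : Finset V} (f : V → ℕ) {c : ℕ}
    (h : ∀ v ∈ s, c ≤ f v) : c ≤ WithTop.untopD 0 ((s.image f).min) ∨ s = ∅ := by
  rcases s.eq_empty_or_nonempty with he | hs
  · exact Or.inr he
  · left
    obtain ⟨m, hm⟩ := Finset.min_of_nonempty (hs.image f)
    obtain ⟨v, hv, rfl⟩ := Finset.mem_image.1 (Finset.mem_of_min hm)
    rw [hm]; simp only [WithTop.untopD_coe]
    exact h v hv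

lemma auxVal_fuel_mono (G : SimpleGraph V) :
    ∀ (n : ℕ) (who : Bool) (D : Finset V), auxVal G n who D ≤ auxVal G (n+1) who D := by
  intro n
  induction n with
  | zero => intro who D; simp [auxVal]
  | succ n ih =>
    intro who D
    by_cases hD : D = Finset.univ
    · rw [auxVal, auxVal]; simp [hD]
    rw [auxVal_succ _ _ _ _ hD, auxVal_succ _ _ _ _ hD]
    cases who
    · simp only [Bool.false_eq_true, if_false]
      exact Finset.sup_le fun v hv => Finset.le_sup (f := fun v => 1 + auxVal G (n+1) true (D ∪ cn G v)) hv
        |>.trans' (Nat.add_le_add_left (ih true _) 1)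
    · simp only [if_true]
      rcases le_untop'_min_image (fun v => 1 + auxVal G (n+1) false (D ∪ cn G v))
          (c := WithTop.untopD 0 (((movesOf G D).image (fun v => 1 + auxVal G n false (D ∪ cn G v))).min))
          (fun v hv => (untop'_min_image_le (movesOf_nonempty hD) _ hv).trans
            (Nat.add_le_add_left (ih false _) 1)) with h | h
      · exact h
      · exact absurd h (movesOf_nonempty hD).ne_empty

lemma auxVal_anti (G : SimpleGraph V) :
    ∀ (n : ℕ) (who : Bool) (D D' : Finset V), D ⊆ D' → auxVal G n who D' ≤ auxVal G n who D := by
  intro n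
  induction n with
  | zero => intro who D D' _; simp [auxVal]
  | succ n ih =>
    intro who D D' hDD
    by_cases hD' : D' = Finset.univ
    · subst hD'; rw [auxVal]; simp
    have hD : D ≠ Finset.univ := fun h => hD' (Finset.univ_subset_iff.1 (h ▸ hDD))
    rw [auxVal_succ _ _ _ _ hD', auxVal_succ _ _ _ _ hD]
    cases who
    · simp only [Bool.false_eq_true, if_false]
      refine Finset.sup_le fun v hv => ?_
      have hv' : v ∈ movesOf G D := mem_movesOf.2 fun hs => (mem_movesOf.1 hv) (hs.trans hDD)
      exact (Finset.le_sup (f := fun v => 1 + auxVal G n true (D ∪ cn G v)) hv').trans'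
        (Nat.add_le_add_left (ih true _ _ (Finset.union_subset_union hDD (le_refl _))) 1)
    · simp only [if_true]
      have key : ∀ m ∈ movesOf G D,
          WithTop.untopD 0 (((movesOf G D').image (fun v => 1 + auxVal G n false (D' ∪ cn G v))).min)
            ≤ 1 + auxVal G n false (D ∪ cn G m) := by
        intro m hm
        by_cases hmD' : cn G m ⊆ D'
        · -- m is not a legal move in D'; play any legal move u instead
          obtain ⟨u, hu⟩ := movesOf_nonempty hD'
          refine (untop'_min_image_le (movesOf_nonempty hD') _ hu).trans
            (Nat.add_le_add_left (ih false _ _ ?_) 1)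
          exact Finset.union_subset (hDD.trans Finset.subset_union_left)
            (hmD'.trans Finset.subset_union_left)
        · have hm' : m ∈ movesOf G D' := mem_movesOf.2 hmD'
          exact (untop'_min_image_le (movesOf_nonempty hD') _ hm').trans
            (Nat.add_le_add_left (ih false _ _ (Finset.union_subset_union hDD (le_refl _))) 1)
      rcases le_untop'_min_image (fun v => 1 + auxVal G n false (D ∪ cn G v))
          (c := WithTop.untopD 0 (((movesOf G D').image (fun v => 1 + auxVal G n false (D' ∪ cn G v))).min))
          key with h | h
      · exact h
      · exact absurd h (movesOf_nonempty hD).ne_empty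


end DomGame

/-- γ_g'(G) ≤ γ_g(G) + 1. -/
theorem stmt19 {V : Type*} [Fintype V] [DecidableEq V] (G : SimpleGraph V) :
    DomGame.gammaG' G ≤ DomGame.gammaG G + 1 := by
  open DomGame in
  show auxVal G (Fintype.card V) false ∅ ≤ auxVal G (Fintype.card V) true ∅ + 1
  by_cases hV : (∅ : Finset V) = Finset.univ
  · cases hN : Fintype.card V with
    | zero => simp [DomGame.auxVal]
    | succ m => rw [DomGame.auxVal]; simp [← hV]
  · have hpos : 0 < Fintype.card V := by
      rcases Finset.eq_empty_or_nonempty (Finset.univ : Finset V) with h | h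
      · exact absurd (h ▸ rfl : (∅ : Finset V) = Finset.univ) hV
      · obtain ⟨v, _⟩ := h; exact Fintype.card_pos_iff.2 ⟨v⟩
    obtain ⟨N, hN⟩ : ∃ N, Fintype.card V = N + 1 :=
      ⟨Fintype.card V - 1, (Nat.succ_pred_eq_of_pos hpos).symm⟩
    rw [hN, DomGame.auxVal_succ _ _ _ _ hV]
    simp only [Bool.false_eq_true, if_false]
    refine Finset.sup_le fun v _ => ?_
    rw [Nat.add_comm 1 _, Finset.empty_union]
    refine Nat.add_le_add_right ?_ 1
    calc DomGame.auxVal G N true (DomGame.cn G v)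
        ≤ DomGame.auxVal G (N+1) true (DomGame.cn G v) := DomGame.auxVal_fuel_mono G N true _
      _ ≤ DomGame.auxVal G (N+1) true ∅ := DomGame.auxVal_anti G (N+1) true _ _ (Finset.empty_subset _)
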